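/- Let X be an obtuse random variable in ℂ^N with 3-tensor S^{ij}_k = E[X^i X^j conj(X^k)] (indices 0,…,N, with X⁰ ≡ 1). Then conj(X^i) X^j = Σ_{k=0}^N conj(S^{ik}_j) X^k pointwise. -/

import Mathlib

/-- with the notations of the obtuse random variable `X` and its
3-tensor `S^{ij}_k = E[X^i X^j conj(X^k)]`, the relation
`conj(X^i) X^j = ∑_k conj(S^{ik}_j) X^k` holds pointwise. -/
theorem stmt15 {N : ℕ} (v : Fin (N + 1) → EuclideanSpace ℂ (Fin N))
    (hv : ∀ i j, i ≠ j → (inner ℂ (v i) (v j) : ℂ) = -1)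
    (X : Fin (N + 1) → Fin (N + 1) → ℂ)
    (hX0 : ∀ ω, X 0 ω = 1)
    (hXs : ∀ (j : Fin N) (ω), X j.succ ω = v ω j) :
    ∀ (i j : Fin (N + 1)) (ω : Fin (N + 1)),
      (starRingEnd ℂ) (X i ω) * X j ω =
        ∑ k, (starRingEnd ℂ) (∑ ω', ((1 / (1 + ‖v ω'‖ ^ 2) : ℝ) : ℂ) *
            (X i ω' * X k ω' * (starRingEnd ℂ) (X j ω'))) * X k ω := by
  intro i j ω
  have hinner : ∀ a b, (inner ℂ (v a) (v b) : ℂ)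
      = ∑ k : Fin N, (starRingEnd ℂ) (v a k) * v b k := by
    intro a b
    rw [PiLp.inner_apply]
    simp [RCLike.inner_apply, mul_comm]
  have key : ∀ ω' : Fin (N + 1), (∑ k, (starRingEnd ℂ) (X k ω') * X k ω) =
      if ω' = ω then ((1 + ‖v ω‖ ^ 2 : ℝ) : ℂ) else 0 := by
    intro ω'
    rw [Fin.sum_univ_succ]
    simp only [hX0, hXs]
    by_cases h : ω' = ω
    · subst h
      have h2 : (inner ℂ (v ω') (v ω') : ℂ) = ((‖v ω'‖ ^ 2 : ℝ) : ℂ) := by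
        rw [inner_self_eq_norm_sq_to_K]; norm_cast
      rw [← hinner, h2]
      simp
    · rw [← hinner, hv _ _ h]
      simp [h]
  have step : ∀ ω' : Fin (N + 1),
      (∑ k, ((1 / (1 + ‖v ω'‖ ^ 2) : ℝ) : ℂ) *
        ((starRingEnd ℂ) (X i ω') * (starRingEnd ℂ) (X k ω') * X j ω') * X k ω)
      = ((1 / (1 + ‖v ω'‖ ^ 2) : ℝ) : ℂ) * ((starRingEnd ℂ) (X i ω') * X j ω') *
          (if ω' = ω then ((1 + ‖v ω‖ ^ 2 : ℝ) : ℂ) else 0) := by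
    intro ω'
    rw [← key ω', Finset.mul_sum]
    apply Finset.sum_congr rfl
    intro k _
    ring
  have hne : (1 + ‖v ω‖ ^ 2 : ℝ) ≠ 0 := by positivity
  calc (starRingEnd ℂ) (X i ω) * X j ω
      = ∑ ω', ((1 / (1 + ‖v ω'‖ ^ 2) : ℝ) : ℂ) * ((starRingEnd ℂ) (X i ω') * X j ω') *
          (if ω' = ω then ((1 + ‖v ω‖ ^ 2 : ℝ) : ℂ) else 0) := by
        rw [Finset.sum_eq_single ω]
        · rw [if_pos rfl]
          have : ((1 / (1 + ‖v ω‖ ^ 2) : ℝ) : ℂ) * ((1 + ‖v ω‖ ^ 2 : ℝ) : ℂ) = 1 := by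
            rw [← Complex.ofReal_mul]
            field_simp
            exact Complex.ofReal_one
          rw [mul_comm (((1 / (1 + ‖v ω‖ ^ 2) : ℝ) : ℂ)) _, mul_assoc, this, mul_one]
        · intro b _ hb
          rw [if_neg hb, mul_zero]
        · intro h; exact absurd (Finset.mem_univ ω) h
    _ = ∑ ω', ∑ k, ((1 / (1 + ‖v ω'‖ ^ 2) : ℝ) : ℂ) *
          ((starRingEnd ℂ) (X i ω') * (starRingEnd ℂ) (X k ω') * X j ω') * X k ω := by
        exact (Finset.sum_congr rfl fun ω' _ => (step ω').symm)
    _ = ∑ k, (starRingEnd ℂ) (∑ ω', ((1 / (1 + ‖v ω'‖ ^ 2) : ℝ) : ℂ) *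
            (X i ω' * X k ω' * (starRingEnd ℂ) (X j ω'))) * X k ω := by
        rw [Finset.sum_comm]
        apply Finset.sum_congr rfl
        intro k _
        rw [map_sum, Finset.sum_mul]
        apply Finset.sum_congr rfl
        intro ω' _
        simp only [map_mul, Complex.conj_conj, Complex.conj_ofReal]
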